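/- Let G be an MP-digraph with multipath matroid M_G, and let e ∈ E(G) be an edge that is not a loop. Then the multipath matroid of the digraph deletion G \ e equals the matroid deletion M_G \ e, and the multipath matroid of the MP-contraction G ⫽ e is isomorphic to the matroid contraction M_G / e, via the natural bijection E(G) \ {e} → E(G ⫽ e). -/

import Mathlib

set_option autoImplicit false

noncomputable section

attribute [local instance] Classical.propDecidable

/-- A (finite) directed multigraph: finitely many vertices and edges, each edge
has a source and a target.  (Loops and, a priori, parallel edges are allowed;
the paper's convention of at most one edge between an ordered pair of distinct
vertices is imposed via `DiGraph.EdgeUnique`.) -/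
structure DiGraph where
  V : Type
  E : Type
  [fintV : Fintype V]
  [decV : DecidableEq V]
  [fintE : Fintype E]
  [decE : DecidableEq E]
  s : E → V
  t : E → V

attribute [instance] DiGraph.fintV DiGraph.decV DiGraph.fintE DiGraph.decE

namespace DiGraph

/-- For each ordered pair of *distinct* vertices there is at most one edge. -/
def EdgeUnique (G : DiGraph) : Prop :=
  ∀ e f : G.E, G.s e = G.s f → G.t e = G.t f → G.s e ≠ G.t e → e = f

/-- G has no loops. -/
def Loopless (G : DiGraph) : Prop := ∀ e : G.E, G.s e ≠ G.t e

/-- A coherently oriented cycle, given as the (cyclically ordered) list of its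
edges: the list is nonempty, has no repeated edges, visits no vertex twice,
and the target of each edge is the source of the next one (cyclically).
A loop is a coherently oriented cycle of length 1. -/
def IsCohCycle (G : DiGraph) (c : List G.E) : Prop :=
  c ≠ [] ∧ c.Nodup ∧ (c.map G.s).Nodup ∧
    ∀ i : Fin c.length,
      G.t (c.get i) =
        G.s (c.get ⟨(i.val + 1) % c.length,
          Nat.mod_lt _ (Nat.lt_of_le_of_lt (Nat.zero_le _) i.isLt)⟩)

/-- `m` is (the edge set of) a multipath of `G`: the corresponding spanning
subgraph has no loops, in-degree and out-degree at most one at each vertex, and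
contains no coherently oriented cycle; equivalently, every connected component
is a single vertex or a simple (directed) path. -/
def IsMultipath (G : DiGraph) (m : Finset G.E) : Prop :=
  (∀ e ∈ m, G.s e ≠ G.t e) ∧
  (∀ e ∈ m, ∀ f ∈ m, G.s e = G.s f → e = f) ∧
  (∀ e ∈ m, ∀ f ∈ m, G.t e = G.t f → e = f) ∧
  ¬∃ c : List G.E, IsCohCycle G c ∧ ∀ g ∈ c, g ∈ m

/-- The forbidden pattern (A): vertices v0,v1,v2 and edges (v1,v0), (v0,v2), (v1,v2). -/
def HasPatternA (G : DiGraph) : Prop :=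
  ∃ v0 v1 v2 : G.V, v0 ≠ v1 ∧ v0 ≠ v2 ∧ v1 ≠ v2 ∧
    (∃ e : G.E, G.s e = v1 ∧ G.t e = v0) ∧
    (∃ e : G.E, G.s e = v0 ∧ G.t e = v2) ∧
    (∃ e : G.E, G.s e = v1 ∧ G.t e = v2)

/-- The reverse of pattern (A). -/
def HasPatternArev (G : DiGraph) : Prop :=
  ∃ v0 v1 v2 : G.V, v0 ≠ v1 ∧ v0 ≠ v2 ∧ v1 ≠ v2 ∧
    (∃ e : G.E, G.s e = v0 ∧ G.t e = v1) ∧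
    (∃ e : G.E, G.s e = v2 ∧ G.t e = v0) ∧
    (∃ e : G.E, G.s e = v2 ∧ G.t e = v1)

/-- The forbidden pattern (B): vertices v0,v1,v2,v3 and edges (v0,v1), (v2,v1), (v2,v3). -/
def HasPatternB (G : DiGraph) : Prop :=
  ∃ v0 v1 v2 v3 : G.V,
    v0 ≠ v1 ∧ v0 ≠ v2 ∧ v0 ≠ v3 ∧ v1 ≠ v2 ∧ v1 ≠ v3 ∧ v2 ≠ v3 ∧
    (∃ e : G.E, G.s e = v0 ∧ G.t e = v1) ∧
    (∃ e : G.E, G.s e = v2 ∧ G.t e = v1) ∧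
    (∃ e : G.E, G.s e = v2 ∧ G.t e = v3)

/-- The reverse of pattern (B). -/
def HasPatternBrev (G : DiGraph) : Prop :=
  ∃ v0 v1 v2 v3 : G.V,
    v0 ≠ v1 ∧ v0 ≠ v2 ∧ v0 ≠ v3 ∧ v1 ≠ v2 ∧ v1 ≠ v3 ∧ v2 ≠ v3 ∧
    (∃ e : G.E, G.s e = v1 ∧ G.t e = v0) ∧
    (∃ e : G.E, G.s e = v1 ∧ G.t e = v2) ∧
    (∃ e : G.E, G.s e = v3 ∧ G.t e = v2)

/-- (MP1): G contains no copy, up to reversing all orientations, of the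
patterns (A) and (B). -/
def MP1 (G : DiGraph) : Prop :=
  ¬HasPatternA G ∧ ¬HasPatternArev G ∧ ¬HasPatternB G ∧ ¬HasPatternBrev G

/-- (MP2): every coherently oriented cycle of length ≥ 2 (i.e. loops excluded)
is a connected component: any edge incident to a vertex of the cycle belongs
to the cycle. -/
def MP2 (G : DiGraph) : Prop :=
  ∀ c : List G.E, IsCohCycle G c → 2 ≤ c.length →
    ∀ f : G.E, (∃ g ∈ c, G.s g = G.s f ∨ G.s g = G.t f) → f ∈ c

def IsMPDigraph (G : DiGraph) : Prop := MP1 G ∧ MP2 G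

/-- The axioms (I1), (I2), (I3) for a family of independent sets of a matroid. -/
def IsIndepFamily {α : Type} [DecidableEq α] (I : Finset α → Prop) : Prop :=
  I ∅ ∧ (∀ A B : Finset α, I A → B ⊆ A → I B) ∧
    ∀ A B : Finset α, I A → I B → B.card < A.card →
      ∃ x ∈ A, x ∉ B ∧ I (insert x B)

/-- `m` is the edge set of a linear sink (two non-loop edges with a common
target and distinct sources). -/
def IsLinearSinkSet (G : DiGraph) (m : Finset G.E) : Prop :=
  ∃ e1 e2 : G.E, e1 ≠ e2 ∧ m = {e1, e2} ∧ G.t e1 = G.t e2 ∧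
    G.s e1 ≠ G.s e2 ∧ G.s e1 ≠ G.t e1 ∧ G.s e2 ≠ G.t e2

/-- `m` is the edge set of a linear source (two non-loop edges with a common
source and distinct targets). -/
def IsLinearSourceSet (G : DiGraph) (m : Finset G.E) : Prop :=
  ∃ e1 e2 : G.E, e1 ≠ e2 ∧ m = {e1, e2} ∧ G.s e1 = G.s e2 ∧
    G.t e1 ≠ G.t e2 ∧ G.s e1 ≠ G.t e1 ∧ G.s e2 ≠ G.t e2

/-- `m` is the edge set of a coherently oriented cycle (possibly a loop). -/
def IsCohCycleSet (G : DiGraph) (m : Finset G.E) : Prop :=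
  ∃ c : List G.E, IsCohCycle G c ∧ m = c.toFinset

/-- Two vertices are adjacent if they are the endpoints of a common edge. -/
def adj (G : DiGraph) (v w : G.V) : Prop :=
  ∃ e : G.E, (G.s e = v ∧ G.t e = w) ∨ (G.s e = w ∧ G.t e = v)

/-- Two vertices lie in the same connected component. -/
def connRel (G : DiGraph) : G.V → G.V → Prop := Relation.EqvGen (adj G)

/-- G is connected. -/
def ConnectedD (G : DiGraph) : Prop := Nonempty G.V ∧ ∀ v w : G.V, connRel G v w

/-- The number of connected components of G (isolated vertices count). -/
def numComponents (G : DiGraph) : ℕ :=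
  Nat.card (Quotient (Relation.EqvGen.setoid (adj G)))

/-- `S` is the set of edges of one of the connected components of `G`. -/
def IsComponentEdges (G : DiGraph) (S : Finset G.E) : Prop :=
  ∃ v : G.V, S = Finset.univ.filter (fun e => connRel G v (G.s e))

/-- in-degree of `v` in the subgraph spanned by the edges of `R`. -/
def indegIn (G : DiGraph) (R : Finset G.E) (v : G.V) : ℕ :=
  (R.filter (fun e => G.t e = v)).card

/-- out-degree of `v` in the subgraph spanned by the edges of `R`. -/
def outdegIn (G : DiGraph) (R : Finset G.E) (v : G.V) : ℕ :=
  (R.filter (fun e => G.s e = v)).card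

def indeg (G : DiGraph) (v : G.V) : ℕ := indegIn G Finset.univ v
def outdeg (G : DiGraph) (v : G.V) : ℕ := outdegIn G Finset.univ v

/-- `v` is a vertex of the subgraph spanned by the edge set `R`. -/
def IncidentTo (G : DiGraph) (R : Finset G.E) (v : G.V) : Prop :=
  ∃ e ∈ R, G.s e = v ∨ G.t e = v

/-- `v` is stable in the subgraph spanned by `R`. -/
def StableIn (G : DiGraph) (R : Finset G.E) (v : G.V) : Prop :=
  indegIn G R v = 0 ∨ outdegIn G R v = 0

/-- `v` is unstable in `G`. -/
def UnstableG (G : DiGraph) (v : G.V) : Prop :=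
  0 < indeg G v ∧ 0 < outdeg G v

/-- adjacency within the subgraph spanned by `R`. -/
def adjIn (G : DiGraph) (R : Finset G.E) (a b : G.V) : Prop :=
  ∃ g ∈ R, (G.s g = a ∧ G.t g = b) ∨ (G.s g = b ∧ G.t g = a)

/-- The subgraph spanned by the edge set `R` is connected. -/
def EdgeConnected (G : DiGraph) (R : Finset G.E) : Prop :=
  ∀ e ∈ R, ∀ f ∈ R, Relation.EqvGen (adjIn G R) (G.s e) (G.s f)

/-- `R` spans a dynamical region of `G`: it is connected, has at least one
edge, every boundary vertex is unstable in `G` but stable in `R` and in its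
complement, and no edge of `R` lies on an oriented cycle of `G` not contained
in `R`. -/
def IsDynRegion (G : DiGraph) (R : Finset G.E) : Prop :=
  R.Nonempty ∧ EdgeConnected G R ∧
  (∀ v : G.V, IncidentTo G R v → IncidentTo G (Finset.univ \ R) v →
     UnstableG G v ∧ StableIn G R v ∧ StableIn G (Finset.univ \ R) v) ∧
  (∀ c : List G.E, IsCohCycle G c → (∃ g ∈ c, g ∈ R) → ∀ g ∈ c, g ∈ R)

/-- A dynamical module is a minimal dynamical region. -/
def IsDynModule (G : DiGraph) (R : Finset G.E) : Prop :=
  IsDynRegion G R ∧ ∀ R' ⊆ R, IsDynRegion G R' → R' = R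

/-- `G` is a sink on `n+1` vertices. -/
def IsSinkGraph (G : DiGraph) : Prop :=
  Loopless G ∧ Fintype.card G.V = Fintype.card G.E + 1 ∧
    ∃! v : G.V, ∀ e : G.E, G.t e = v

/-- `G` is a source on `n+1` vertices. -/
def IsSourceGraph (G : DiGraph) : Prop :=
  Loopless G ∧ Fintype.card G.V = Fintype.card G.E + 1 ∧
    ∃! v : G.V, ∀ e : G.E, G.s e = v

/-- `R` spans a sink: all its edges are non-loops with a common target and
pairwise distinct sources. -/
def IsSinkSet (G : DiGraph) (R : Finset G.E) : Prop :=
  ∃ v : G.V, (∀ e ∈ R, G.t e = v ∧ G.s e ≠ v) ∧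
    ∀ e ∈ R, ∀ f ∈ R, G.s e = G.s f → e = f

/-- `R` spans a source. -/
def IsSourceSet (G : DiGraph) (R : Finset G.E) : Prop :=
  ∃ v : G.V, (∀ e ∈ R, G.s e = v ∧ G.t e ≠ v) ∧
    ∀ e ∈ R, ∀ f ∈ R, G.t e = G.t f → e = f

/-- The whole digraph `G` is a coherently oriented cycle. -/
def IsCohCycleGraph (G : DiGraph) : Prop :=
  ∃ c : List G.E, IsCohCycle G c ∧ (∀ e : G.E, e ∈ c) ∧
    ∀ v : G.V, ∃ g ∈ c, G.s g = v

/-- Rank function of the multipath matroid: the size of a largest multipath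
contained in `A`. -/
def mrank (G : DiGraph) (A : Finset G.E) : ℕ :=
  (A.powerset.filter (fun m => IsMultipath G m)).sup Finset.card

/-- The Tutte polynomial of the multipath matroid of `G`, evaluated at `(x,y)`. -/
def tutte (G : DiGraph) (x y : ℤ) : ℤ :=
  ∑ A : Finset G.E,
    (x - 1) ^ (mrank G Finset.univ - mrank G A) *
      (y - 1) ^ (A.card - mrank G A)

/-- `e` is a loop of the multipath matroid. -/
def IsMatroidLoop (G : DiGraph) (e : G.E) : Prop := ¬IsMultipath G {e}

/-- `e` is a coloop of the multipath matroid: it belongs to every maximal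
independent set. -/
def IsColoop (G : DiGraph) (e : G.E) : Prop :=
  ∀ m : Finset G.E, IsMultipath G m →
    (∀ m' : Finset G.E, IsMultipath G m' → m ⊆ m' → m' = m) → e ∈ m

/-- The digraph obtained from `G` by deleting the edge `e`. -/
def deleteEdge (G : DiGraph) (e : G.E) : DiGraph where
  V := G.V
  E := {f : G.E // f ≠ e}
  s := fun f => G.s f.val
  t := fun f => G.t f.val

/-- The vertex set of the MP-contraction `G ⫽ e`: the vertices of `G` other
than the endpoints of `e`, together with a new vertex `x = Sum.inr ()`. -/
def CVert (G : DiGraph) (e : G.E) : Type :=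
  {u : G.V // u ≠ G.s e ∧ u ≠ G.t e} ⊕ Unit

instance (G : DiGraph) (e : G.E) : Fintype (CVert G e) := by
  unfold CVert; infer_instance

instance (G : DiGraph) (e : G.E) : DecidableEq (CVert G e) := by
  unfold CVert; infer_instance

/-- Source, in `G ⫽ e`, of the edge coming from the edge `f` of `G`
(for `e = (v,w)`, the new source is `x` iff `s f ∈ {v,w}` or `t f = w`). -/
def contrS (G : DiGraph) (e f : G.E) : CVert G e :=
  if h : G.s f = G.s e ∨ G.s f = G.t e ∨ G.t f = G.t e then Sum.inr ()
  else Sum.inl ⟨G.s f, by push_neg at h; exact ⟨h.1, h.2.1⟩⟩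

/-- Target, in `G ⫽ e`, of the edge coming from the edge `f` of `G`
(for `e = (v,w)`, the new target is `x` iff `t f ∈ {v,w}` or `s f = v`). -/
def contrT (G : DiGraph) (e f : G.E) : CVert G e :=
  if h : G.t f = G.s e ∨ G.t f = G.t e ∨ G.s f = G.s e then Sum.inr ()
  else Sum.inl ⟨G.t f, by push_neg at h; exact ⟨h.1, h.2.1⟩⟩

/-- The MP-contraction `G ⫽ e`. -/
def mpContract (G : DiGraph) (e : G.E) : DiGraph where
  V := CVert G e
  E := {f : G.E // f ≠ e}
  s := fun f => contrS G e f.val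
  t := fun f => contrT G e f.val

/-- The digraph `C̃_e(G)`: the MP-contraction `G ⫽ e` with all loops at the
new vertex `x` deleted. -/
def tildeC (G : DiGraph) (e : G.E) : DiGraph where
  V := CVert G e
  E := {f : G.E // f ≠ e ∧
         ¬(contrS G e f = Sum.inr () ∧ contrT G e f = Sum.inr ())}
  s := fun f => contrS G e f.val
  t := fun f => contrT G e f.val

/-- The classical contraction `G / e` of a non-loop edge `e = (v,w)`:
identify `w` with `v` and delete `e`. -/
def contractClassical (G : DiGraph) (e : G.E) (hne : G.s e ≠ G.t e) : DiGraph where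
  V := {u : G.V // u ≠ G.t e}
  E := {f : G.E // f ≠ e}
  s := fun f => if h : G.s f.val = G.t e then ⟨G.s e, hne⟩ else ⟨G.s f.val, h⟩
  t := fun f => if h : G.t f.val = G.t e then ⟨G.s e, hne⟩ else ⟨G.t f.val, h⟩

/-- A flowing k-colouring of `G`. -/
def IsFlowing (G : DiGraph) (k : ℕ) (c : G.V → Fin k) : Prop :=
  (∀ e : G.E, c (G.s e) ≠ c (G.t e)) ∧
  (∀ e f : G.E, G.t e = G.t f → c (G.s e) = c (G.s f)) ∧
  (∀ e f : G.E, G.s e = G.s f → c (G.t e) = c (G.t f))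

/-- The number of flowing k-colourings of `G`. -/
def tau (G : DiGraph) (k : ℕ) : ℕ :=
  Nat.card {c : G.V → Fin k // IsFlowing G k c}

/-- The spanning subgraph of `G` with edge set `S`. -/
def subgraphOn (G : DiGraph) (S : Finset G.E) : DiGraph where
  V := G.V
  E := {f : G.E // f ∈ S}
  s := fun f => G.s f.val
  t := fun f => G.t f.val

/-- The underlying undirected multigraph of `G` contains a cycle
(of length ≥ 1; a single loop, or two parallel/antiparallel edges, count). -/
def HasUndirCycle (G : DiGraph) : Prop :=
  ∃ (n : ℕ) (ed : Fin n → G.E) (vx : Fin n → G.V),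
    0 < n ∧ Function.Injective ed ∧ Function.Injective vx ∧
    ∀ i : Fin n,
      (G.s (ed i) = vx i ∧ G.t (ed i) = vx ⟨(i.val + 1) % n, Nat.mod_lt _ i.pos⟩) ∨
      (G.t (ed i) = vx i ∧ G.s (ed i) = vx ⟨(i.val + 1) % n, Nat.mod_lt _ i.pos⟩)

/-- The underlying undirected multigraph of `G` is a forest. -/
def IsForestD (G : DiGraph) : Prop := ¬HasUndirCycle G

/-- The underlying undirected multigraph of `G` is a tree. -/
def IsTreeD (G : DiGraph) : Prop := ConnectedD G ∧ IsForestD G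

/-- The multipath matroid of `G` is representable over the field `F`. -/
def RepOver (G : DiGraph) (F : Type) [Field F] : Prop :=
  ∃ (n : ℕ) (N : Matrix (Fin n) G.E F),
    ∀ m : Finset G.E, IsMultipath G m ↔
      LinearIndependent F (fun f : {x : G.E // x ∈ m} => N.transpose f.val)

end DiGraph

/-- A finite undirected multigraph. -/
structure Multigraph where
  V : Type
  E : Type
  [fintV : Fintype V]
  [decV : DecidableEq V]
  [fintE : Fintype E]
  [decE : DecidableEq E]
  ends : E → Sym2 V

attribute [instance] Multigraph.fintV Multigraph.decV Multigraph.fintE Multigraph.decE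

/-- The multigraph `M` has a cycle all of whose edges lie in `F`. -/
def Multigraph.HasCycleIn (M : Multigraph) (F : Finset M.E) : Prop :=
  ∃ (n : ℕ) (ed : Fin n → M.E) (vx : Fin n → M.V),
    0 < n ∧ Function.Injective ed ∧ Function.Injective vx ∧
    (∀ i : Fin n, ed i ∈ F) ∧
    ∀ i : Fin n, M.ends (ed i) = s(vx i, vx ⟨(i.val + 1) % n, Nat.mod_lt _ i.pos⟩)

namespace DiGraph

theorem isCohCycle_iff' (G : DiGraph) (p : List G.E) :
    G.IsCohCycle p ↔ p ≠ [] ∧ p.Nodup ∧ (p.map G.s).Nodup ∧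
      ∀ i (hi : i < p.length),
        G.t (p[i]'hi) = G.s (p[(i+1) % p.length]'(Nat.mod_lt _
          (Nat.lt_of_le_of_lt (Nat.zero_le _) hi))) := by
  unfold IsCohCycle
  refine and_congr_right fun _ => and_congr_right fun _ => and_congr_right fun _ => ?_
  constructor
  · intro h i hi; exact h ⟨i, hi⟩
  · intro h i; exact h i.val i.isLt

theorem getElem_idx {α : Type} (l : List α) {i j : ℕ} (h : i = j) (hi : i < l.length) :
    l[i]'hi = l[j]'(h ▸ hi) := by subst h; rfl

theorem src_inj_of_nodup {G : DiGraph} {p : List G.E} (h : (p.map G.s).Nodup)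
    {i j : ℕ} (hi : i < p.length) (hj : j < p.length)
    (hs : G.s (p[i]'hi) = G.s (p[j]'hj)) : i = j := by
  have h1 : (p.map G.s)[i]'(by simpa using hi) = (p.map G.s)[j]'(by simpa using hj) := by
    simpa using hs
  exact h.getElem_inj_iff.mp h1

theorem IsCohCycle.rotate {G : DiGraph} {p : List G.E} (h : G.IsCohCycle p) (k : ℕ) :
    G.IsCohCycle (p.rotate k) := by
  rw [isCohCycle_iff'] at h ⊢
  obtain ⟨h1, h2, h3, h4⟩ := h
  have hpos : 0 < p.length := List.length_pos_iff.mpr h1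
  have hlen : (p.rotate k).length = p.length := p.length_rotate k
  refine ⟨List.length_pos_iff.mp (by rw [hlen]; exact hpos),
    List.nodup_rotate.mpr h2, by rw [List.map_rotate]; exact List.nodup_rotate.mpr h3,
    ?_⟩
  intro i hi
  rw [List.getElem_rotate, List.getElem_rotate]
  have hidx : ((i + 1) % (p.rotate k).length + k) % p.length
      = ((i + k) % p.length + 1) % p.length := by
    rw [hlen, Nat.mod_add_mod, Nat.mod_add_mod]
    congr 1; omega
  rw [getElem_idx p hidx]
  exact h4 ((i + k) % p.length) (Nat.mod_lt _ hpos)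

theorem cohCycle_transfer (G H : DiGraph) (p : List G.E) (d : List H.E)
    (hlen : d.length = p.length) (hc : G.IsCohCycle p)
    (hinj : ∀ i j (hi : i < p.length) (hj : j < p.length),
        H.s (d[i]'(by omega)) = H.s (d[j]'(by omega)) → G.s (p[i]'hi) = G.s (p[j]'hj))
    (hco : ∀ i j (hi : i < p.length) (hj : j < p.length),
        G.t (p[i]'hi) = G.s (p[j]'hj) → H.t (d[i]'(by omega)) = H.s (d[j]'(by omega))) :
    H.IsCohCycle d := by
  rw [isCohCycle_iff'] at hc ⊢
  obtain ⟨h1, h2, h3, h4⟩ := hc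
  have hpos : 0 < p.length := List.length_pos_iff.mpr h1
  have hd1 : d ≠ [] := List.length_pos_iff.mp (by omega)
  have sInj : ∀ i j (hi : i < p.length) (hj : j < p.length),
      G.s (p[i]'hi) = G.s (p[j]'hj) → i = j := fun i j hi hj hs =>
    src_inj_of_nodup h3 hi hj hs
  have hdnd : d.Nodup := by
    rw [List.nodup_iff_injective_getElem]
    rintro ⟨i, hi⟩ ⟨j, hj⟩ hij
    have hij2 : d[i]'(by omega) = d[j]'(by omega) := hij
    have : G.s (p[i]'(by omega)) = G.s (p[j]'(by omega)) :=
      hinj i j (by omega) (by omega) (congrArg H.s hij2)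
    exact Fin.ext (sInj i j (by omega) (by omega) this)
  have hdnds : (d.map H.s).Nodup := by
    rw [List.nodup_iff_injective_getElem]
    rintro ⟨i, hi⟩ ⟨j, hj⟩ hij
    simp only [List.length_map] at hi hj
    have hij2 : (d.map H.s)[i]'(by simpa using hi) = (d.map H.s)[j]'(by simpa using hj) := hij
    rw [List.getElem_map, List.getElem_map] at hij2
    have : G.s (p[i]'(by omega)) = G.s (p[j]'(by omega)) :=
      hinj i j (by omega) (by omega) hij2
    exact Fin.ext (sInj i j (by omega) (by omega) this)
  refine ⟨hd1, hdnd, hdnds, ?_⟩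
  intro i hi
  have hi' : i < p.length := by omega
  have h5 := h4 i hi'
  have := hco i ((i+1) % p.length) hi' (Nat.mod_lt _ hpos) h5
  rw [getElem_idx d (show (i+1) % d.length = (i+1) % p.length by rw [hlen])]
  exact this

theorem contrS_pos {G : DiGraph} {e f : G.E}
    (h : G.s f = G.s e ∨ G.s f = G.t e ∨ G.t f = G.t e) :
    contrS G e f = Sum.inr () := dif_pos h

theorem contrS_neg {G : DiGraph} {e f : G.E}
    (h1 : G.s f ≠ G.s e) (h2 : G.s f ≠ G.t e) (h3 : G.t f ≠ G.t e) :
    contrS G e f = Sum.inl ⟨G.s f, h1, h2⟩ := by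
  have h : ¬(G.s f = G.s e ∨ G.s f = G.t e ∨ G.t f = G.t e) := by tauto
  exact dif_neg h

theorem contrT_pos {G : DiGraph} {e f : G.E}
    (h : G.t f = G.s e ∨ G.t f = G.t e ∨ G.s f = G.s e) :
    contrT G e f = Sum.inr () := dif_pos h

theorem contrT_neg {G : DiGraph} {e f : G.E}
    (h1 : G.t f ≠ G.s e) (h2 : G.t f ≠ G.t e) (h3 : G.s f ≠ G.s e) :
    contrT G e f = Sum.inl ⟨G.t f, h1, h2⟩ := by
  have h : ¬(G.t f = G.s e ∨ G.t f = G.t e ∨ G.s f = G.s e) := by tauto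
  exact dif_neg h

theorem contrS_inl_val {G : DiGraph} {e f : G.E} {u} (h : contrS G e f = Sum.inl u) :
    u.val = G.s f := by
  by_cases hc : G.s f = G.s e ∨ G.s f = G.t e ∨ G.t f = G.t e
  · rw [contrS_pos hc] at h; exact absurd h Sum.inr_ne_inl
  · rw [contrS_neg (fun h' => hc (Or.inl h')) (fun h' => hc (Or.inr (Or.inl h')))
      (fun h' => hc (Or.inr (Or.inr h')))] at h
    obtain rfl := (Sum.inl.inj h).symm
    rfl

theorem contrT_inl_val {G : DiGraph} {e f : G.E} {u} (h : contrT G e f = Sum.inl u) :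
    u.val = G.t f := by
  by_cases hc : G.t f = G.s e ∨ G.t f = G.t e ∨ G.s f = G.s e
  · rw [contrT_pos hc] at h; exact absurd h Sum.inr_ne_inl
  · rw [contrT_neg (fun h' => hc (Or.inl h')) (fun h' => hc (Or.inr (Or.inl h')))
      (fun h' => hc (Or.inr (Or.inr h')))] at h
    obtain rfl := (Sum.inl.inj h).symm
    rfl

theorem contrS_not_pos {G : DiGraph} {e f : G.E} (h : contrS G e f ≠ Sum.inr ()) :
    ¬(G.s f = G.s e ∨ G.s f = G.t e ∨ G.t f = G.t e) := fun hp => h (contrS_pos hp)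

theorem contrT_not_pos {G : DiGraph} {e f : G.E} (h : contrT G e f ≠ Sum.inr ()) :
    ¬(G.t f = G.s e ∨ G.t f = G.t e ∨ G.s f = G.s e) := fun hp => h (contrT_pos hp)

theorem multipath_deleteEdge (G : DiGraph) (e : G.E) (m : Finset (deleteEdge G e).E) :
    (deleteEdge G e).IsMultipath m ↔ G.IsMultipath (m.image (fun f => f.val)) := by
  set M := m.image (fun f : (deleteEdge G e).E => f.val) with hM
  have hmemM : ∀ g ∈ M, ∃ f ∈ m, f.val = g := by
    intro g hg; exact Finset.mem_image.mp hg
  have hmm : ∀ f : (deleteEdge G e).E, f ∈ m → f.val ∈ M := by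
    intro f hf; exact Finset.mem_image_of_mem _ hf
  constructor
  · rintro ⟨h1, h2, h3, h4⟩
    refine ⟨?_, ?_, ?_, ?_⟩
    · intro g hg; obtain ⟨f, hf, rfl⟩ := hmemM g hg; exact h1 f hf
    · intro g hg g' hg' hs
      obtain ⟨f, hf, rfl⟩ := hmemM g hg; obtain ⟨f', hf', rfl⟩ := hmemM g' hg'
      exact congrArg Subtype.val (h2 f hf f' hf' hs)
    · intro g hg g' hg' hs
      obtain ⟨f, hf, rfl⟩ := hmemM g hg; obtain ⟨f', hf', rfl⟩ := hmemM g' hg'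
      exact congrArg Subtype.val (h3 f hf f' hf' hs)
    · rintro ⟨p, hcyc, hsub⟩
      have hcne : ∀ a ∈ p, a ≠ e := by
        intro a ha
        obtain ⟨f, _, rfl⟩ := hmemM a (hsub a ha)
        exact f.prop
      set d : List (deleteEdge G e).E := p.pmap (fun a h => (⟨a, h⟩ : {f : G.E // f ≠ e}))
        hcne with hd
      have hdl : d.length = p.length := List.length_pmap
      have hdg : ∀ i (hi : i < p.length), (d[i]'(by omega)).val = p[i]'hi := by
        intro i hi
        show ((List.pmap (fun a h => (⟨a, h⟩ : {f : G.E // f ≠ e})) p hcne)[i]'(by simp; omega)).val = p[i]'hi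
        simp
      apply h4
      refine ⟨d, ?_, ?_⟩
      · apply cohCycle_transfer G (deleteEdge G e) p d hdl hcyc
        · intro i j hi hj hs
          have hs' : G.s (d[i]'(by omega)).val = G.s (d[j]'(by omega)).val := hs
          rwa [hdg i hi, hdg j hj] at hs'
        · intro i j hi hj hs
          show G.t (d[i]'(by omega)).val = G.s (d[j]'(by omega)).val
          rw [hdg i hi, hdg j hj]; exact hs
      · intro g hg
        replace hg := List.mem_pmap.mp hg
        obtain ⟨a, ha, rfl⟩ := hg
        obtain ⟨f, hf, hfa⟩ := hmemM a (hsub a ha)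
        have : (⟨a, hcne a ha⟩ : {f : G.E // f ≠ e}) = f := Subtype.ext hfa.symm
        rwa [this]
  · rintro ⟨h1, h2, h3, h4⟩
    refine ⟨?_, ?_, ?_, ?_⟩
    · intro f hf; exact h1 f.val (hmm f hf)
    · intro f hf f' hf' hs; exact Subtype.ext (h2 f.val (hmm f hf) f'.val (hmm f' hf') hs)
    · intro f hf f' hf' hs; exact Subtype.ext (h3 f.val (hmm f hf) f'.val (hmm f' hf') hs)
    · rintro ⟨p, hcyc, hsub⟩
      apply h4
      refine ⟨p.map Subtype.val, ?_, ?_⟩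
      · apply cohCycle_transfer (deleteEdge G e) G p (p.map Subtype.val)
          (List.length_map _) hcyc
        · intro i j hi hj hs
          erw [List.getElem_map, List.getElem_map] at hs
          exact hs
        · intro i j hi hj hs
          erw [List.getElem_map, List.getElem_map]
          exact hs
      · intro g hg
        replace hg := List.mem_map.mp hg
        obtain ⟨f, hf, rfl⟩ := hg
        exact hmm f (hsub f hf)

theorem contrS_inr_elim {G : DiGraph} {e f : G.E} (h : contrS G e f = Sum.inr ()) :
    G.s f = G.s e ∨ G.s f = G.t e ∨ G.t f = G.t e := by
  by_contra hc
  push_neg at hc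
  rw [contrS_neg hc.1 hc.2.1 hc.2.2] at h
  simp at h

theorem contrT_inr_elim {G : DiGraph} {e f : G.E} (h : contrT G e f = Sum.inr ()) :
    G.t f = G.s e ∨ G.t f = G.t e ∨ G.s f = G.s e := by
  by_contra hc
  push_neg at hc
  rw [contrT_neg hc.1 hc.2.1 hc.2.2] at h
  simp at h

/-- If a coherently oriented cycle of `G ⫽ e` has no source equal to the new
vertex `x`, then its list of underlying edges is a coherently oriented cycle
of `G`. -/
theorem aux_nox (G : DiGraph) (e : G.E) (q : List {f : G.E // f ≠ e})
    (hq : (mpContract G e).IsCohCycle q)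
    (hnx : ∀ i (hi : i < q.length), contrS G e ((q[i]'hi)).val ≠ Sum.inr ()) :
    G.IsCohCycle (q.map (fun f => f.val)) := by
  apply cohCycle_transfer (mpContract G e) G q _ (List.length_map _) hq
  · intro i j hi hj hs
    erw [List.getElem_map, List.getElem_map] at hs
    have n1 := contrS_not_pos (hnx i hi); push_neg at n1
    have n2 := contrS_not_pos (hnx j hj); push_neg at n2
    show contrS G e ((q[i]'hi)).val = contrS G e ((q[j]'hj)).val
    rw [contrS_neg n1.1 n1.2.1 n1.2.2, contrS_neg n2.1 n2.2.1 n2.2.2]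
    exact congrArg Sum.inl (Subtype.ext hs)
  · intro i j hi hj hst
    erw [List.getElem_map, List.getElem_map]
    have n2 := contrS_not_pos (hnx j hj); push_neg at n2
    have hst' : contrT G e ((q[i]'hi)).val = contrS G e ((q[j]'hj)).val := hst
    rw [contrS_neg n2.1 n2.2.1 n2.2.2] at hst'
    exact (contrT_inl_val hst').symm

/-- A coherently oriented cycle of `G` avoiding `e` and the endpoints of `e`
lifts to a coherently oriented cycle of `G ⫽ e`. -/
theorem aux_lift (G : DiGraph) (e : G.E) (p : List G.E) (hp : G.IsCohCycle p)
    (hsv : ∀ a ∈ p, G.s a ≠ G.s e) (htw : ∀ a ∈ p, G.t a ≠ G.t e)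
    (hsw : ∀ a ∈ p, G.s a ≠ G.t e) (htv : ∀ a ∈ p, G.t a ≠ G.s e)
    (hpe : ∀ a ∈ p, a ≠ e) :
    (mpContract G e).IsCohCycle
      (p.pmap (fun a h => (⟨a, h⟩ : {f : G.E // f ≠ e})) hpe) := by
  have hlen : (p.pmap (fun a h => (⟨a, h⟩ : {f : G.E // f ≠ e})) hpe).length = p.length :=
    List.length_pmap
  apply cohCycle_transfer G (mpContract G e) p _ hlen hp
  · intro i j hi hj hs
    have hg1 : ((p.pmap (fun a h => (⟨a, h⟩ : {f : G.E // f ≠ e})) hpe)[i]'(by omega)).val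
        = p[i]'hi := by simp
    have hg2 : ((p.pmap (fun a h => (⟨a, h⟩ : {f : G.E // f ≠ e})) hpe)[j]'(by omega)).val
        = p[j]'hj := by simp
    have hs' : contrS G e ((p.pmap (fun a h => (⟨a, h⟩ : {f : G.E // f ≠ e})) hpe)[i]'(by omega)).val
        = contrS G e ((p.pmap (fun a h => (⟨a, h⟩ : {f : G.E // f ≠ e})) hpe)[j]'(by omega)).val := hs
    rw [hg1, hg2] at hs'
    have hmi : p[i]'hi ∈ p := List.getElem_mem hi
    have hmj : p[j]'hj ∈ p := List.getElem_mem hj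
    rw [contrS_neg (hsv _ hmi) (hsw _ hmi) (htw _ hmi),
        contrS_neg (hsv _ hmj) (hsw _ hmj) (htw _ hmj)] at hs'
    exact congrArg Subtype.val (Sum.inl.inj hs')
  · intro i j hi hj hst
    have hmi : p[i]'hi ∈ p := List.getElem_mem hi
    have hmj : p[j]'hj ∈ p := List.getElem_mem hj
    show contrT G e ((p.pmap (fun a h => (⟨a, h⟩ : {f : G.E // f ≠ e})) hpe)[i]'(by omega)).val
        = contrS G e ((p.pmap (fun a h => (⟨a, h⟩ : {f : G.E // f ≠ e})) hpe)[j]'(by omega)).val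
    have hg1 : ((p.pmap (fun a h => (⟨a, h⟩ : {f : G.E // f ≠ e})) hpe)[i]'(by omega)).val
        = p[i]'hi := by simp
    have hg2 : ((p.pmap (fun a h => (⟨a, h⟩ : {f : G.E // f ≠ e})) hpe)[j]'(by omega)).val
        = p[j]'hj := by simp
    rw [hg1, hg2]
    rw [contrT_neg (htv _ hmi) (htw _ hmi) (hsv _ hmi),
        contrS_neg (hsv _ hmj) (hsw _ hmj) (htw _ hmj)]
    exact congrArg Sum.inl (Subtype.ext hst)


/-- If a coherently oriented cycle of `G ⫽ e` passes through the new vertex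
`x` (as a source), then inserting `e` at that spot yields a coherently
oriented cycle of `G`. -/
theorem aux_cons (G : DiGraph) (e : G.E)
    (q : List {f : G.E // f ≠ e})
    (hq : (mpContract G e).IsCohCycle q)
    (hA : ∀ f ∈ q, G.s f.val ≠ G.s e)
    (hB : ∀ f ∈ q, G.t f.val ≠ G.t e)
    (h0 : ∀ (h : 0 < q.length), contrS G e ((q[0]'h)).val = Sum.inr ()) :
    G.IsCohCycle (e :: q.map (fun f => f.val)) := by
  have hq' : q ≠ [] ∧ q.Nodup ∧ (q.map (mpContract G e).s).Nodup ∧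
      ∀ i (hi : i < q.length), contrT G e (q[i]'hi).val =
        contrS G e (q[(i+1) % q.length]'(Nat.mod_lt _
          (Nat.lt_of_le_of_lt (Nat.zero_le _) hi))).val :=
    (isCohCycle_iff' (mpContract G e) q).mp hq
  rw [isCohCycle_iff']
  obtain ⟨q1, q2, q3, q4⟩ := hq'
  have hn : 0 < q.length := List.length_pos_iff.mpr q1
  have hA' : ∀ i (hi : i < q.length), G.s ((q[i]'hi)).val ≠ G.s e :=
    fun i hi => hA _ (List.getElem_mem hi)
  have hB' : ∀ i (hi : i < q.length), G.t ((q[i]'hi)).val ≠ G.t e :=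
    fun i hi => hB _ (List.getElem_mem hi)
  have hs0 : G.s ((q[0]'hn)).val = G.t e := by
    rcases contrS_inr_elim (h0 hn) with h | h | h
    · exact absurd h (hA' 0 hn)
    · exact h
    · exact absurd h (hB' 0 hn)
  have hxne : ∀ i (hi : i < q.length), 0 < i →
      contrS G e ((q[i]'hi)).val ≠ Sum.inr () := by
    intro i hi hipos hc
    have hss : (mpContract G e).s (q[i]'hi) = (mpContract G e).s (q[0]'hn) := by
      show contrS G e _ = contrS G e _
      rw [hc, h0 hn]
    have := src_inj_of_nodup (G := mpContract G e) q3 hi hn hss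
    omega
  have hco1 : ∀ i (hi : i + 1 < q.length),
      G.t ((q[i]'(by omega)).val) = G.s ((q[i+1]'hi)).val := by
    intro i hi
    have h4 := q4 i (by omega)
    have hmod : (i+1) % q.length = i+1 := Nat.mod_eq_of_lt hi
    simp only [hmod] at h4
    have np := contrS_not_pos (hxne (i+1) hi (by omega)); push_neg at np
    have h4' : contrT G e ((q[i]'(by omega)).val)
        = contrS G e ((q[i+1]'hi)).val := h4
    rw [contrS_neg np.1 np.2.1 np.2.2] at h4'
    exact (contrT_inl_val h4').symm
  have hcolast : G.t ((q[q.length-1]'(by omega)).val) = G.s e := by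
    have h4 := q4 (q.length-1) (by omega)
    have hmod : (q.length-1+1) % q.length = 0 := by
      rw [Nat.sub_add_cancel hn, Nat.mod_self]
    simp only [hmod] at h4
    have h4' : contrT G e ((q[q.length-1]'(by omega)).val) = Sum.inr () :=
      h4.trans (h0 hn)
    rcases contrT_inr_elim h4' with h | h | h
    · exact h
    · exact absurd h (hB' (q.length-1) (by omega))
    · exact absurd h (hA' (q.length-1) (by omega))
  have hlen : (e :: q.map (fun f : {f : G.E // f ≠ e} => f.val)).length = q.length + 1 := by
    simp
  refine ⟨by simp, ?_, ?_, ?_⟩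
  · rw [List.nodup_cons]
    refine ⟨?_, q2.map Subtype.val_injective⟩
    intro hc
    rw [List.mem_map] at hc
    obtain ⟨f, _, hf⟩ := hc
    exact f.prop hf
  · rw [List.map_cons, List.nodup_cons]
    constructor
    · intro hc
      rw [List.mem_map] at hc
      obtain ⟨a, ha, hsa⟩ := hc
      rw [List.mem_map] at ha
      obtain ⟨f, hf, rfl⟩ := ha
      exact hA f hf hsa
    · rw [List.map_map, List.nodup_iff_injective_getElem]
      rintro ⟨i, hi⟩ ⟨j, hj⟩ hij
      simp only [List.length_map] at hi hj
      have hij2 : (q.map (G.s ∘ fun f => f.val))[i]'(by simpa using hi)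
          = (q.map (G.s ∘ fun f => f.val))[j]'(by simpa using hj) := hij
      rw [List.getElem_map, List.getElem_map] at hij2
      have hij3 : G.s ((q[i]'hi)).val = G.s ((q[j]'hj)).val := hij2
      apply Fin.ext
      show i = j
      rcases Nat.eq_zero_or_pos i with rfl | hi1 <;> rcases Nat.eq_zero_or_pos j with rfl | hj1
      · rfl
      · exfalso
        have np := contrS_not_pos (hxne j hj hj1); push_neg at np
        exact np.2.1 (by rw [← hij3]; exact hs0)
      · exfalso
        have np := contrS_not_pos (hxne i hi hi1); push_neg at np
        exact np.2.1 (by rw [hij3]; exact hs0)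
      · have npi := contrS_not_pos (hxne i hi hi1); push_neg at npi
        have npj := contrS_not_pos (hxne j hj hj1); push_neg at npj
        have hss : (mpContract G e).s (q[i]'hi) = (mpContract G e).s (q[j]'hj) := by
          show contrS G e _ = contrS G e _
          rw [contrS_neg npi.1 npi.2.1 npi.2.2, contrS_neg npj.1 npj.2.1 npj.2.2]
          exact congrArg Sum.inl (Subtype.ext hij3)
        exact src_inj_of_nodup (G := mpContract G e) q3 hi hj hss
  · intro i hi
    rcases i with _ | i
    · have hmod : (0+1) % (e :: q.map (fun f : {f : G.E // f ≠ e} => f.val)).length = 0+1 := by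
        rw [hlen]; exact Nat.mod_eq_of_lt (by omega)
      rw [getElem_idx _ hmod]
      simp only [List.getElem_cons_zero, List.getElem_cons_succ, List.getElem_map]
      exact hs0.symm
    · have hi' : i < q.length := by
        rw [hlen] at hi; omega
      by_cases hlast : i + 1 = q.length
      · have hmod : (i+1+1) % (e :: q.map (fun f : {f : G.E // f ≠ e} => f.val)).length = 0 := by
          rw [hlen, hlast, Nat.mod_self]
        rw [getElem_idx _ hmod]
        simp only [List.getElem_cons_succ, List.getElem_map, List.getElem_cons_zero]
        rw [getElem_idx q (show i = q.length - 1 by omega)]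
        exact hcolast
      · have hmod : (i+1+1) % (e :: q.map (fun f : {f : G.E // f ≠ e} => f.val)).length
            = i+1+1 := by
          rw [hlen]; exact Nat.mod_eq_of_lt (by omega)
        rw [getElem_idx _ hmod]
        simp only [List.getElem_cons_succ, List.getElem_map]
        exact hco1 i (by omega)

/-- Multipaths of the MP-contraction correspond to multipaths of `G`
containing `e`. -/
theorem multipath_mpContract (G : DiGraph) (e : G.E) (hne : G.s e ≠ G.t e)
    (m : Finset (mpContract G e).E) :
    (mpContract G e).IsMultipath m ↔
      G.IsMultipath (insert e (m.image (fun f => f.val))) := by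
  have heM : e ∈ insert e (m.image (fun f : (mpContract G e).E => f.val)) :=
    Finset.mem_insert_self _ _
  have hmm : ∀ f : (mpContract G e).E, f ∈ m →
      f.val ∈ insert e (m.image (fun f : (mpContract G e).E => f.val)) :=
    fun f hf => Finset.mem_insert_of_mem (Finset.mem_image_of_mem _ hf)
  have hmemM : ∀ g ∈ insert e (m.image (fun f : (mpContract G e).E => f.val)),
      g = e ∨ ∃ hg : g ≠ e, (⟨g, hg⟩ : {f : G.E // f ≠ e}) ∈ m := by
    intro g hg
    rcases Finset.mem_insert.mp hg with h | h
    · exact Or.inl h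
    · obtain ⟨f, hf, rfl⟩ := Finset.mem_image.mp h
      exact Or.inr ⟨f.prop, hf⟩
  constructor
  · rintro ⟨h1, h2, h3, h4⟩
    have hA : ∀ f : (mpContract G e).E, f ∈ m → G.s f.val ≠ G.s e := by
      intro f hf hc
      apply h1 f hf
      show contrS G e f.val = contrT G e f.val
      rw [contrS_pos (Or.inl hc), contrT_pos (Or.inr (Or.inr hc))]
    have hB : ∀ f : (mpContract G e).E, f ∈ m → G.t f.val ≠ G.t e := by
      intro f hf hc
      apply h1 f hf
      show contrS G e f.val = contrT G e f.val
      rw [contrS_pos (Or.inr (Or.inr hc)), contrT_pos (Or.inr (Or.inl hc))]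
    refine ⟨?_, ?_, ?_, ?_⟩
    · intro g hg
      rcases hmemM g hg with rfl | ⟨hge, hgm⟩
      · exact hne
      · intro hc
        apply h1 _ hgm
        show contrS G e g = contrT G e g
        by_cases hsv : G.s g = G.s e
        · exact absurd hsv (hA _ hgm)
        · by_cases hsw : G.s g = G.t e
          · exact absurd (hc.symm.trans hsw) (hB _ hgm)
          · have h1' : G.t g ≠ G.s e := fun h => hsv (hc.trans h)
            rw [contrS_neg hsv hsw (hB _ hgm), contrT_neg h1' (hB _ hgm) hsv]
            exact congrArg Sum.inl (Subtype.ext hc)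
    · intro g hg g' hg' hs
      rcases hmemM g hg with rfl | ⟨hge, hgm⟩
      · rcases hmemM g' hg' with rfl | ⟨hge', hgm'⟩
        · rfl
        · exact absurd hs.symm (hA _ hgm')
      · rcases hmemM g' hg' with rfl | ⟨hge', hgm'⟩
        · exact absurd hs (hA _ hgm)
        · by_cases hsw : G.s g = G.t e
          · have hsw' : G.s g' = G.t e := hs.symm.trans hsw
            have := h2 _ hgm _ hgm' (by
              show contrS G e g = contrS G e g'
              rw [contrS_pos (Or.inr (Or.inl hsw)), contrS_pos (Or.inr (Or.inl hsw'))])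
            exact congrArg Subtype.val this
          · have hsw' : G.s g' ≠ G.t e := fun h => hsw (hs.trans h)
            have := h2 _ hgm _ hgm' (by
              show contrS G e g = contrS G e g'
              rw [contrS_neg (hA _ hgm) hsw (hB _ hgm),
                contrS_neg (hA _ hgm') hsw' (hB _ hgm')]
              exact congrArg Sum.inl (Subtype.ext hs))
            exact congrArg Subtype.val this
    · intro g hg g' hg' hs
      rcases hmemM g hg with rfl | ⟨hge, hgm⟩
      · rcases hmemM g' hg' with rfl | ⟨hge', hgm'⟩
        · rfl
        · exact absurd hs.symm (hB _ hgm')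
      · rcases hmemM g' hg' with rfl | ⟨hge', hgm'⟩
        · exact absurd hs (hB _ hgm)
        · by_cases htv : G.t g = G.s e
          · have htv' : G.t g' = G.s e := hs.symm.trans htv
            have := h3 _ hgm _ hgm' (by
              show contrT G e g = contrT G e g'
              rw [contrT_pos (Or.inl htv), contrT_pos (Or.inl htv')])
            exact congrArg Subtype.val this
          · have htv' : G.t g' ≠ G.s e := fun h => htv (hs.trans h)
            have := h3 _ hgm _ hgm' (by
              show contrT G e g = contrT G e g'
              rw [contrT_neg htv (hB _ hgm) (hA _ hgm),
                contrT_neg htv' (hB _ hgm') (hA _ hgm')]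
              exact congrArg Sum.inl (Subtype.ext hs))
            exact congrArg Subtype.val this
    · rintro ⟨p, hpcyc, hpsub⟩
      by_cases hep : e ∈ p
      · -- the cycle passes through `e`
        obtain ⟨k, hk, hpk⟩ := List.mem_iff_getElem.mp hep
        have hp' := hpcyc.rotate k
        have hmemrot : ∀ g ∈ p.rotate k,
            g ∈ insert e (m.image (fun f : (mpContract G e).E => f.val)) :=
          fun g hg => hpsub g (List.mem_rotate.mp hg)
        set r := p.rotate k with hr
        obtain ⟨r1, r2, r3, r4⟩ := (isCohCycle_iff' G r).mp hp'
        have hrpos : 0 < r.length := List.length_pos_iff.mpr r1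
        have hr0 : r[0]'hrpos = e := by
          show (p.rotate k)[0]'_ = e
          rw [List.getElem_rotate]
          rw [getElem_idx p (show (0+k) % p.length = k from by
            rw [Nat.zero_add]; exact Nat.mod_eq_of_lt hk)]
          exact hpk
        have hn2 : 2 ≤ r.length := by
          by_contra hcon
          have h1len : r.length = 1 := by omega
          have hthis := r4 0 hrpos
          simp only [show (0+1) % r.length = 0 from by simp [h1len]] at hthis
          rw [hr0] at hthis
          exact hne hthis.symm
        have hrne : ∀ i (hi : i < r.length), 0 < i → (r[i]'hi) ≠ e := by
          intro i hi hipos hc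
          have : i = 0 := r2.getElem_inj_iff.mp (by rw [hr0]; exact hc)
          omega
        have hrmem : ∀ i (hi : i < r.length) (h0 : 0 < i),
            (⟨r[i]'hi, hrne i hi h0⟩ : {f : G.E // f ≠ e}) ∈ m := by
          intro i hi h0
          rcases hmemM _ (hmemrot _ (List.getElem_mem hi)) with h | ⟨hg, hgm⟩
          · exact absurd h (hrne i hi h0)
          · exact hgm
        have hsvr : ∀ i (hi : i < r.length), 0 < i → G.s (r[i]'hi) ≠ G.s e :=
          fun i hi h0 => hA _ (hrmem i hi h0)
        have htwr : ∀ i (hi : i < r.length), 0 < i → G.t (r[i]'hi) ≠ G.t e :=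
          fun i hi h0 => hB _ (hrmem i hi h0)
        have hst0 : G.s (r[1]'(by omega)) = G.t e := by
          have hthis := r4 0 hrpos
          simp only [show (0+1) % r.length = 1 from Nat.mod_eq_of_lt (by omega)] at hthis
          rw [hr0] at hthis
          exact hthis.symm
        have htlast : G.t (r[r.length-1]'(by omega)) = G.s e := by
          have hthis := r4 (r.length-1) (by omega)
          simp only [show (r.length-1+1) % r.length = 0 from by
            rw [Nat.sub_add_cancel hrpos, Nat.mod_self]] at hthis
          rw [hr0] at hthis
          exact hthis
        have hswr : ∀ i (hi : i < r.length), 1 < i → G.s (r[i]'hi) ≠ G.t e := by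
          intro i hi hi1 hc
          have : i = 1 := src_inj_of_nodup r3 hi (by omega) (hc.trans hst0.symm)
          omega
        have htvr : ∀ i (hi : i < r.length), 0 < i → i < r.length - 1 →
            G.t (r[i]'hi) ≠ G.s e := by
          intro i hi h0i hilast hc
          have hthis := r4 i hi
          simp only [show (i+1) % r.length = i+1 from Nat.mod_eq_of_lt (by omega)] at hthis
          exact hsvr (i+1) (by omega) (by omega) (hthis.symm.trans hc)
        have hd1e : ∀ a ∈ r.drop 1, a ≠ e := by
          intro a ha
          obtain ⟨i, hi, rfl⟩ := List.mem_iff_getElem.mp ha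
          have hi' : i < r.length - 1 := by simpa using hi
          rw [List.getElem_drop]
          exact hrne (1+i) (by omega) (by omega)
        apply h4
        set q : List {f : G.E // f ≠ e} :=
          (r.drop 1).pmap (fun a h => ⟨a, h⟩) hd1e with hq
        have hqlen : q.length = r.length - 1 := by simp [hq]
        have hst0' : ∀ j (hj : j < r.length), j = 1 → G.s (r[j]'hj) = G.t e := by
          intro j hj hj1; subst hj1; exact hst0
        have htlast' : ∀ j (hj : j < r.length), j = r.length - 1 →
            G.t (r[j]'hj) = G.s e := by
          intro j hj hj1; subst hj1; exact htlast
        have hqg : ∀ i (hi : i < r.length - 1),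
            ((q[i]'(by omega)) : {f : G.E // f ≠ e}).val = r[1+i]'(by omega) := by
          intro i hi
          have hkey : (((r.drop 1).pmap (fun a h => (⟨a, h⟩ : {f : G.E // f ≠ e})) hd1e)[i]'(by
              simp; omega)).val = r[1+i]'(by omega) := by
            rw [List.getElem_pmap]
            show (r.drop 1)[i]'(by simp; omega) = r[1+i]'(by omega)
            rw [List.getElem_drop]
          exact hkey
        refine ⟨q, ?_, ?_⟩
        · refine (isCohCycle_iff' (mpContract G e) q).mpr (?_ : q ≠ [] ∧ q.Nodup ∧ (q.map (fun f : {f : G.E // f ≠ e} => contrS G e f.val)).Nodup ∧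
      ∀ i (hi : i < q.length), contrT G e (q[i]'hi).val =
        contrS G e (q[(i+1) % q.length]'(Nat.mod_lt _
          (Nat.lt_of_le_of_lt (Nat.zero_le _) hi))).val)
          refine ⟨?_, ?_, ?_, ?_⟩
          · have : 0 < q.length := by omega
            exact List.length_pos_iff.mp this
          · exact ((List.drop_sublist 1 r).nodup r2).pmap
              (fun a ha b hb h => congrArg Subtype.val h)
          · rw [List.nodup_iff_injective_getElem]
            rintro ⟨i, hi⟩ ⟨j, hj⟩ hij
            simp only [List.length_map] at hi hj
            have hij2 : (List.map (fun f : {f : G.E // f ≠ e} => contrS G e f.val) q)[i]'(by simpa using hi)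
                = (List.map (fun f : {f : G.E // f ≠ e} => contrS G e f.val) q)[j]'(by simpa using hj) := hij
            rw [List.getElem_map, List.getElem_map] at hij2
            have hij3 : contrS G e ((q[i]'hi)).val = contrS G e ((q[j]'hj)).val := hij2
            apply Fin.ext
            show i = j
            rcases Nat.eq_zero_or_pos i with rfl | hi1 <;>
              rcases Nat.eq_zero_or_pos j with rfl | hj1
            · rfl
            · exfalso
              rw [hqg 0 (by omega), hqg j (by omega)] at hij3
              have hsj : G.s (r[1+j]'(by omega)) ≠ G.t e := hswr (1+j) (by omega) (by omega)
              rw [contrS_pos (Or.inr (Or.inl (hst0' (1+0) (by omega) (by omega))))] at hij3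
              rcases contrS_inr_elim hij3.symm with h | h | h
              · exact hsvr (1+j) (by omega) (by omega) h
              · exact hsj h
              · exact htwr (1+j) (by omega) (by omega) h
            · exfalso
              rw [hqg i (by omega), hqg 0 (by omega)] at hij3
              have hsi : G.s (r[1+i]'(by omega)) ≠ G.t e := hswr (1+i) (by omega) (by omega)
              rw [contrS_pos (Or.inr (Or.inl (hst0' (1+0) (by omega) (by omega))))] at hij3
              rcases contrS_inr_elim hij3 with h | h | h
              · exact hsvr (1+i) (by omega) (by omega) h
              · exact hsi h
              · exact htwr (1+i) (by omega) (by omega) h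
            · rw [hqg i (by omega), hqg j (by omega)] at hij3
              rw [contrS_neg (hsvr (1+i) (by omega) (by omega))
                    (hswr (1+i) (by omega) (by omega)) (htwr (1+i) (by omega) (by omega)),
                  contrS_neg (hsvr (1+j) (by omega) (by omega))
                    (hswr (1+j) (by omega) (by omega))
                    (htwr (1+j) (by omega) (by omega))] at hij3
              have hval : G.s (r[1+i]'(by omega)) = G.s (r[1+j]'(by omega)) :=
                congrArg Subtype.val (Sum.inl.inj hij3)
              have := src_inj_of_nodup r3 (show 1+i < r.length by omega)
                (show 1+j < r.length by omega) hval
              omega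
          · intro i hi
            rw [hqlen] at hi
            by_cases hlast : i = r.length - 2
            · have hmod : (i+1) % q.length = 0 := by
                rw [hqlen, hlast]
                rw [show r.length - 2 + 1 = r.length - 1 by omega, Nat.mod_self]
              simp only [hmod]
              show contrT G e ((q[i]'(by omega))).val = contrS G e ((q[0]'(by omega))).val
              rw [hqg i (by omega), hqg 0 (by omega)]
              rw [contrT_pos (Or.inl (htlast' (1+i) (by omega) (by omega)))]
              rw [contrS_pos (Or.inr (Or.inl (hst0' (1+0) (by omega) (by omega))))]
            · have hmod : (i+1) % q.length = i+1 := by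
                rw [hqlen]; exact Nat.mod_eq_of_lt (by omega)
              simp only [hmod]
              show contrT G e ((q[i]'(by omega))).val = contrS G e ((q[i+1]'(by omega))).val
              rw [hqg i (by omega), hqg (i+1) (by omega)]
              rw [contrT_neg (htvr (1+i) (by omega) (by omega) (by omega))
                    (htwr (1+i) (by omega) (by omega)) (hsvr (1+i) (by omega) (by omega))]
              rw [contrS_neg (hsvr (1+(i+1)) (by omega) (by omega))
                    (hswr (1+(i+1)) (by omega) (by omega))
                    (htwr (1+(i+1)) (by omega) (by omega))]
              apply congrArg Sum.inl
              apply Subtype.ext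
              show G.t (r[1+i]'(by omega)) = G.s (r[1+(i+1)]'(by omega))
              have hthis := r4 (1+i) (by omega)
              simp only [show (1+i+1) % r.length = 1+(i+1) from by
                rw [Nat.mod_eq_of_lt (by omega)]; omega] at hthis
              exact hthis
        · intro g hg
          replace hg := List.mem_pmap.mp hg
          obtain ⟨a, ha, rfl⟩ := hg
          obtain ⟨i, hi, rfl⟩ := List.mem_iff_getElem.mp ha
          have hi' : i < r.length - 1 := by simpa using hi
          have := hrmem (1+i) (by omega) (by omega)
          have hdeq : (List.drop 1 r)[i]'hi = r[1+i]'(by omega) := by rw [List.getElem_drop]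
          have hsub : (⟨(List.drop 1 r)[i]'hi, hd1e _ ha⟩ : (mpContract G e).E)
              = ⟨r[1+i]'(by omega), hrne (1+i) (by omega) (by omega)⟩ := Subtype.ext hdeq
          exact (congrArg (fun x : (mpContract G e).E => x ∈ m) hsub).mpr this
      · -- the cycle avoids `e`
        have hpe : ∀ a ∈ p, a ≠ e := fun a ha h => hep (h ▸ ha)
        have hpm : ∀ a (ha : a ∈ p), (⟨a, hpe a ha⟩ : {f : G.E // f ≠ e}) ∈ m := by
          intro a ha
          rcases hmemM a (hpsub a ha) with h | ⟨hg, hgm⟩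
          · exact absurd h (hpe a ha)
          · exact hgm
        have hsv : ∀ a ∈ p, G.s a ≠ G.s e := fun a ha => hA _ (hpm a ha)
        have htw : ∀ a ∈ p, G.t a ≠ G.t e := fun a ha => hB _ (hpm a ha)
        obtain ⟨p1, p2, p3, p4⟩ := (isCohCycle_iff' G p).mp hpcyc
        have hpos : 0 < p.length := List.length_pos_iff.mpr p1
        have htv : ∀ a ∈ p, G.t a ≠ G.s e := by
          intro a ha hc
          obtain ⟨i, hi, rfl⟩ := List.mem_iff_getElem.mp ha
          have hco := p4 i hi
          exact hsv _ (List.getElem_mem (Nat.mod_lt _ hpos)) (hco.symm.trans hc)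
        have hswf : ∀ a ∈ p, G.s a ≠ G.t e := by
          intro a ha hc
          obtain ⟨i, hi, rfl⟩ := List.mem_iff_getElem.mp ha
          have hkey : ((i + p.length - 1) % p.length + 1) % p.length = i := by
            rcases Nat.eq_zero_or_pos i with rfl | h1
            · have e1 : (0 + p.length - 1) % p.length = p.length - 1 := by
                rw [Nat.zero_add]; exact Nat.mod_eq_of_lt (by omega)
              rw [e1, Nat.sub_add_cancel hpos, Nat.mod_self]
            · have e1 : i + p.length - 1 = (i-1) + p.length := by omega
              have e2 : (i - 1 + p.length) % p.length = i - 1 := by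
                rw [Nat.add_mod_right]; exact Nat.mod_eq_of_lt (by omega)
              rw [e1, e2, show i - 1 + 1 = i by omega, Nat.mod_eq_of_lt hi]
          have hco := p4 ((i + p.length - 1) % p.length) (Nat.mod_lt _ hpos)
          simp only [hkey] at hco
          exact htw _ (List.getElem_mem (Nat.mod_lt _ hpos)) (hco.trans hc)
        apply h4
        refine ⟨p.pmap (fun a h => ⟨a, h⟩) hpe,
          aux_lift G e p hpcyc hsv htw hswf htv hpe, ?_⟩
        intro g hg
        replace hg := List.mem_pmap.mp hg
        obtain ⟨a, ha, rfl⟩ := hg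
        exact hpm a ha
  · rintro ⟨g1, g2, g3, g4⟩
    have hA : ∀ f : (mpContract G e).E, f ∈ m → G.s f.val ≠ G.s e := by
      intro f hf hc
      exact f.prop (g2 f.val (hmm f hf) e heM hc)
    have hB : ∀ f : (mpContract G e).E, f ∈ m → G.t f.val ≠ G.t e := by
      intro f hf hc
      exact f.prop (g3 f.val (hmm f hf) e heM hc)
    have no2 : ∀ f : (mpContract G e).E, f ∈ m →
        ¬(G.s f.val = G.t e ∧ G.t f.val = G.s e) := by
      rintro f hf ⟨hfs, hft⟩
      apply g4
      refine ⟨[e, f.val], ?_, ?_⟩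
      · rw [isCohCycle_iff']
        refine ⟨by simp, ?_, ?_, ?_⟩
        · simp only [List.nodup_cons, List.mem_singleton]
          exact ⟨by simp; exact fun hc => f.prop hc.symm, by simp⟩
        · simp only [List.map_cons, List.map_nil, List.nodup_cons]
          exact ⟨by simp; exact fun hc => hne (hc.trans hfs), by simp⟩
        · intro i hi
          simp only [List.length_cons, List.length_nil] at hi
          rcases i with _ | i
          · simpa using hfs.symm
          · rcases i with _ | i
            · simpa using hft
            · omega
      · intro g hg
        rcases List.mem_cons.mp hg with rfl | hg'
        · exact heM
        · rcases List.mem_cons.mp hg' with rfl | hg''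
          · exact hmm f hf
          · simp at hg''
    refine ⟨?_, ?_, ?_, ?_⟩
    · intro f hf
      show contrS G e f.val ≠ contrT G e f.val
      by_cases hsw : G.s f.val = G.t e
      · by_cases htv : G.t f.val = G.s e
        · exact absurd ⟨hsw, htv⟩ (no2 f hf)
        · rw [contrS_pos (Or.inr (Or.inl hsw)), contrT_neg htv (hB f hf) (hA f hf)]
          exact Sum.inr_ne_inl
      · by_cases htv : G.t f.val = G.s e
        · rw [contrS_neg (hA f hf) hsw (hB f hf), contrT_pos (Or.inl htv)]
          exact Sum.inl_ne_inr
        · rw [contrS_neg (hA f hf) hsw (hB f hf), contrT_neg htv (hB f hf) (hA f hf)]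
          intro hc
          exact g1 f.val (hmm f hf) (congrArg Subtype.val (Sum.inl.inj hc))
    · intro f hf f' hf' hs
      have hs' : contrS G e f.val = contrS G e f'.val := hs
      apply Subtype.ext
      by_cases hsw : G.s f.val = G.t e
      · rw [contrS_pos (Or.inr (Or.inl hsw))] at hs'
        rcases contrS_inr_elim hs'.symm with h | h | h
        · exact absurd h (hA f' hf')
        · exact g2 _ (hmm f hf) _ (hmm f' hf') (hsw.trans h.symm)
        · exact absurd h (hB f' hf')
      · rw [contrS_neg (hA f hf) hsw (hB f hf)] at hs'
        by_cases hsw' : G.s f'.val = G.t e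
        · rw [contrS_pos (Or.inr (Or.inl hsw'))] at hs'
          exact absurd hs' (by simp)
        · rw [contrS_neg (hA f' hf') hsw' (hB f' hf')] at hs'
          exact g2 _ (hmm f hf) _ (hmm f' hf') (congrArg Subtype.val (Sum.inl.inj hs'))
    · intro f hf f' hf' hs
      have hs' : contrT G e f.val = contrT G e f'.val := hs
      apply Subtype.ext
      by_cases htv : G.t f.val = G.s e
      · rw [contrT_pos (Or.inl htv)] at hs'
        rcases contrT_inr_elim hs'.symm with h | h | h
        · exact g3 _ (hmm f hf) _ (hmm f' hf') (htv.trans h.symm)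
        · exact absurd h (hB f' hf')
        · exact absurd h (hA f' hf')
      · rw [contrT_neg htv (hB f hf) (hA f hf)] at hs'
        by_cases htv' : G.t f'.val = G.s e
        · rw [contrT_pos (Or.inl htv')] at hs'
          exact absurd hs' (by simp)
        · rw [contrT_neg htv' (hB f' hf') (hA f' hf')] at hs'
          exact g3 _ (hmm f hf) _ (hmm f' hf') (congrArg Subtype.val (Sum.inl.inj hs'))
    · rintro ⟨q, hqcyc, hqsub⟩
      by_cases hx : ∃ i, ∃ hi : i < q.length, contrS G e ((q[i]'hi)).val = Sum.inr ()
      · obtain ⟨k, hk, hks⟩ := hx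
        apply g4
        have hrot := hqcyc.rotate k
        refine ⟨e :: (q.rotate k).map (fun f : {f : G.E // f ≠ e} => f.val),
          aux_cons G e (q.rotate k) hrot
            (fun f hf => hA f (hqsub f (List.mem_rotate.mp hf)))
            (fun f hf => hB f (hqsub f (List.mem_rotate.mp hf))) ?_, ?_⟩
        · intro h
          erw [List.getElem_rotate]
          simp only [Nat.zero_add, Nat.mod_eq_of_lt hk]
          exact (congrArg (fun x : (mpContract G e).E => contrS G e x.val)
            (getElem_idx q (Nat.mod_eq_of_lt hk) (Nat.mod_lt _ (by omega)))).trans hks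
        · intro g hg
          rcases List.mem_cons.mp hg with rfl | hg'
          · exact heM
          · replace hg' := List.mem_map.mp hg'
            obtain ⟨f, hf, rfl⟩ := hg'
            exact hmm f (hqsub f (List.mem_rotate.mp hf))
      · apply g4
        have hx' : ∀ i (hi : i < q.length), contrS G e ((q[i]'hi)).val ≠ Sum.inr () := by
          intro i hi hc
          exact hx ⟨i, hi, hc⟩
        refine ⟨q.map (fun f : {f : G.E // f ≠ e} => f.val), aux_nox G e q hqcyc hx', ?_⟩
        intro g hg
        replace hg := List.mem_map.mp hg
        obtain ⟨f, hf, rfl⟩ := hg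
        exact hmm f (hqsub f hf)

end DiGraph

open DiGraph in
/-- For an MP-digraph `G` and a non-loop edge `e`, the
multipath matroid of the digraph deletion `G \ e` equals the matroid deletion
`M_G \ e`, and the multipath matroid of the MP-contraction `G ⫽ e` is
isomorphic to the matroid contraction `M_G / e`, under the natural bijection
`E(G) \ {e} → E(G ⫽ e)`. -/
theorem deletion_contraction_of_multipath_matroid (G : DiGraph)
    (hU : G.EdgeUnique) (hMP : G.IsMPDigraph) (e : G.E) (hne : G.s e ≠ G.t e) :
    (∀ m : Finset (deleteEdge G e).E,
       (deleteEdge G e).IsMultipath m ↔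
         G.IsMultipath (m.image (fun f => f.val))) ∧
    (∀ m : Finset (mpContract G e).E,
       (mpContract G e).IsMultipath m ↔
         G.IsMultipath (insert e (m.image (fun f => f.val)))) :=
  ⟨fun m => multipath_deleteEdge G e m, fun m => multipath_mpContract G e hne m⟩
end
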